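/- arXiv:2105.11520 — 3 statements merged into one kernel-verified Lean document; each statement's English description precedes it below -/
import Mathlib

section
/- For Young diagrams (partitions) D and E of n, the intertwining number ⟨Ind_{S_E}^{S_n}(sgn), Ind_{S_D}^{S_n}(1)⟩ is zero unless E is dominated by the transpose (conjugate) partition Dᵗ in the dominance order. -/
noncomputable section

open CategoryTheory Equiv

namespace PieriGL

/-- Partial sums of the row lengths of a Young diagram (parts padded with zeros). -/
def psum (D : YoungDiagram) (s : ℕ) : ℕ := ∑ j ∈ Finset.range s, D.rowLen j

/-- The dominance order on Young diagrams: `domLE D E` means `D ⪯ E`, i.e. for all `i`,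
`d_1 + ... + d_i ≤ e_1 + ... + e_i`. -/
def domLE (D E : YoungDiagram) : Prop := ∀ i, psum D i ≤ psum E i

/-- `E - D` is a horizontal strip: `D ⊆ E` and each column of `E` is at most one box longer
than the corresponding column of `D`. -/
def IsHorizontalStrip (D E : YoungDiagram) : Prop :=
  D ≤ E ∧ ∀ j, E.colLen j ≤ D.colLen j + 1

/-- The index of the block (row of the Young diagram) in which `i` lies, for the partition of
`{0, 1, 2, ...}` into consecutive blocks of sizes the rows of `D`. -/
def blk (D : YoungDiagram) (i : ℕ) : ℕ :=
  ((Finset.range (i + 1)).filter fun s => psum D (s + 1) ≤ i).card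

lemma psum_mono (D : YoungDiagram) {s t : ℕ} (h : s ≤ t) : psum D s ≤ psum D t :=
  Finset.sum_le_sum_of_subset (Finset.range_subset_range.2 h)

lemma colLen_zero_le (D : YoungDiagram) {i j : ℕ} (h : (i, j) ∈ D) : i < D.colLen 0 := by
  rw [← YoungDiagram.mem_iff_lt_colLen]
  exact D.up_left_mem le_rfl (Nat.zero_le _) h

lemma card_eq_psum (D : YoungDiagram) {m : ℕ} (hm : D.colLen 0 ≤ m) : psum D m = D.card := by
  have := Finset.card_eq_sum_card_fiberwise
    (f := Prod.fst) (s := D.cells) (t := Finset.range m)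
    (fun c hc => Finset.mem_range.2 ((colLen_zero_le D (by exact hc)).trans_le hm))
  rw [show D.card = D.cells.card from rfl, this]
  exact (Finset.sum_congr rfl fun i _ => by rw [D.rowLen_eq_card]; rfl).symm

lemma colLen_zero_le_card (D : YoungDiagram) : D.colLen 0 ≤ D.card := by
  classical
  have h : (Finset.range (D.colLen 0)).card ≤ D.cells.card := by
    apply Finset.card_le_card_of_injOn (fun i => (i, 0))
    · intro i hi
      rw [Finset.mem_coe, Finset.mem_range] at hi
      exact YoungDiagram.mem_iff_lt_colLen.2 hi
    · intro a _ b _ hab; exact (Prod.ext_iff.1 hab).1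
  simpa using h

lemma psum_le_card (D : YoungDiagram) (s : ℕ) : psum D s ≤ D.card := by
  rcases le_total s (D.colLen 0) with h | h
  · exact (psum_mono D h).trans (card_eq_psum D le_rfl).le
  · exact (card_eq_psum D h).le

lemma psum_card_eq (D : YoungDiagram) {m : ℕ} (hm : D.card ≤ m) : psum D m = D.card :=
  card_eq_psum D ((colLen_zero_le_card D).trans hm)

lemma succ_le_psum (D : YoungDiagram) {t i : ℕ} (h1 : psum D (t + 1) ≤ i) (h2 : i < D.card) :
    t + 1 ≤ psum D (t + 1) := by
  have hpos : ∀ j < t + 1, 1 ≤ D.rowLen j := by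
    intro j hj
    by_contra hz
    push_neg at hz
    interval_cases hr : D.rowLen j
    have hcl : D.colLen 0 ≤ j := by
      by_contra hc
      push_neg at hc
      have : (j, 0) ∈ D := YoungDiagram.mem_iff_lt_colLen.2 hc
      rw [YoungDiagram.mem_iff_lt_rowLen, hr] at this
      omega
    have := card_eq_psum D hcl
    have h3 : psum D j ≤ psum D (t + 1) := psum_mono D (by omega)
    omega
  calc t + 1 = ∑ j ∈ Finset.range (t + 1), 1 := by simp
  _ ≤ psum D (t + 1) := Finset.sum_le_sum fun j hj => hpos j (Finset.mem_range.1 hj)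

lemma le_blk_iff (D : YoungDiagram) {i : ℕ} (hi : i < D.card) {s : ℕ} :
    s ≤ blk D i ↔ psum D s ≤ i := by
  constructor
  · intro hs
    by_contra hps
    push_neg at hps
    have hsub : (Finset.range (i + 1)).filter (fun t => psum D (t + 1) ≤ i) ⊆
        Finset.range (s - 1) := by
      intro t ht
      rw [Finset.mem_filter] at ht
      have h1 : psum D (t + 1) < psum D s := lt_of_le_of_lt ht.2 hps
      have h2 : t + 1 < s := by
        by_contra hc
        push_neg at hc
        exact absurd (psum_mono D hc) (by omega)
      exact Finset.mem_range.2 (by omega)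
    have hs1 : 1 ≤ s := by
      by_contra hc
      push_neg at hc
      interval_cases s
      simp [psum] at hps
    have hb : blk D i ≤ s - 1 := by
      have := Finset.card_le_card hsub
      simpa [blk] using this
    omega
  · intro hps
    have hsub : Finset.range s ⊆
        (Finset.range (i + 1)).filter (fun t => psum D (t + 1) ≤ i) := by
      intro t ht
      rw [Finset.mem_range] at ht
      have h1 : psum D (t + 1) ≤ psum D s := psum_mono D (by omega)
      have h2 : psum D (t + 1) ≤ i := h1.trans hps
      have h3 := succ_le_psum D h2 hi
      exact Finset.mem_filter.2 ⟨Finset.mem_range.2 (by omega), h2⟩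
    have := Finset.card_le_card hsub
    simpa [blk] using this

lemma blk_lt_iff (D : YoungDiagram) {i : ℕ} (hi : i < D.card) {s : ℕ} :
    blk D i < s ↔ i < psum D s := by
  rw [← not_le, ← not_le, le_blk_iff D hi]

lemma blk_lt_card (D : YoungDiagram) {i : ℕ} (hi : i < D.card) : blk D i < D.card := by
  rw [blk_lt_iff D hi, psum_card_eq D le_rfl]
  exact hi

lemma card_filter_val_lt {n : ℕ} {m : ℕ} (hm : m ≤ n) :
    (Finset.univ.filter fun i : Fin n => (i : ℕ) < m).card = m := by
  have key : (Finset.univ.filter fun i : Fin n => (i : ℕ) < m).card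
      = (Finset.range m).card := by
    apply Finset.card_bij (fun (i : Fin n) _ => (i : ℕ))
    · intro a ha
      rw [Finset.mem_filter] at ha
      exact Finset.mem_range.2 ha.2
    · intro a ha b hb hab
      exact Fin.val_injective hab
    · intro b hb
      rw [Finset.mem_range] at hb
      exact ⟨⟨b, lt_of_lt_of_le hb hm⟩, Finset.mem_filter.2 ⟨Finset.mem_univ _, hb⟩, rfl⟩
  rw [key, Finset.card_range]

lemma card_blk_fiber_le (D : YoungDiagram) {n : ℕ} (hD : D.card = n) (j : ℕ) :
    (Finset.univ.filter fun x : Fin n => blk D x = j).card ≤ D.rowLen j := by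
  have hIco : (Finset.Ico (psum D j) (psum D (j + 1))).card = D.rowLen j := by
    rw [Nat.card_Ico]
    have : psum D (j + 1) = psum D j + D.rowLen j := Finset.sum_range_succ _ _
    omega
  rw [← hIco]
  refine Finset.card_le_card_of_injOn (fun x => (x : ℕ)) ?_ ?_
  · intro x hx
    rw [Finset.mem_coe, Finset.mem_filter] at hx
    have hxlt : (x : ℕ) < D.card := hD ▸ x.isLt
    have h1 : psum D j ≤ (x : ℕ) := (le_blk_iff D hxlt).1 (hx.2.ge)
    have h2 : (x : ℕ) < psum D (j + 1) := (blk_lt_iff D hxlt).1 (by omega)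
    exact Finset.mem_Ico.2 ⟨h1, h2⟩
  · intro a _ b _ hab
    exact Fin.val_injective hab

lemma range_filter_lt (s d : ℕ) :
    (Finset.range s).filter (fun k => k < d) = Finset.range (min s d) := by
  ext k
  simp only [Finset.mem_filter, Finset.mem_range, lt_min_iff]

lemma sum_min_le (D : YoungDiagram) (n s : ℕ) :
    ∑ j ∈ Finset.range n, min s (D.rowLen j) ≤ psum D.transpose s := by
  have key : ∀ j, min s (D.rowLen j) =
      ∑ k ∈ Finset.range s, if k < D.rowLen j then 1 else 0 := by
    intro j
    rw [← Finset.card_filter, range_filter_lt, Finset.card_range]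
  calc ∑ j ∈ Finset.range n, min s (D.rowLen j)
      = ∑ j ∈ Finset.range n, ∑ k ∈ Finset.range s,
          if k < D.rowLen j then 1 else 0 := Finset.sum_congr rfl fun j _ => key j
    _ = ∑ k ∈ Finset.range s, ∑ j ∈ Finset.range n,
          if k < D.rowLen j then 1 else 0 := Finset.sum_comm
    _ ≤ ∑ k ∈ Finset.range s, D.colLen k := by
        apply Finset.sum_le_sum
        intro k _
        rw [← Finset.card_filter]
        have heq : (Finset.range n).filter (fun j => k < D.rowLen j) =
            (Finset.range n).filter (fun j => j < D.colLen k) := by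
          ext j
          simp only [Finset.mem_filter, and_congr_right_iff]
          intro _
          rw [← YoungDiagram.mem_iff_lt_rowLen, YoungDiagram.mem_iff_lt_colLen]
        rw [heq, range_filter_lt, Finset.card_range]
        exact min_le_right _ _
    _ = psum D.transpose s := by
        apply Finset.sum_congr rfl
        intro k _
        rw [YoungDiagram.rowLen_transpose]

lemma exists_same_blk {n : ℕ} (D E : YoungDiagram)
    (hD : D.card = n) (hE : E.card = n) (h : ¬ domLE E D.transpose)
    (w : Equiv.Perm (Fin n)) :
    ∃ a b : Fin n, a ≠ b ∧ blk E a = blk E b ∧ blk D (w a) = blk D (w b) := by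
  classical
  by_contra hc
  push_neg at hc
  apply h
  intro s
  set A := Finset.univ.filter fun i : Fin n => blk E i < s with hA
  have hAcard : A.card = psum E s := by
    have hset : A = Finset.univ.filter fun i : Fin n => (i : ℕ) < psum E s := by
      ext i
      simp only [hA, Finset.mem_filter, Finset.mem_univ, true_and]
      exact blk_lt_iff E (hE ▸ i.isLt)
    rw [hset, card_filter_val_lt (hE ▸ psum_le_card E s)]
  have hfib : ∀ i ∈ A, blk D (w i) ∈ Finset.range n := by
    intro i _
    have h1 : ((w i : Fin n) : ℕ) < D.card := by rw [hD]; exact (w i).isLt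
    have h2 := blk_lt_card D h1
    rw [hD] at h2
    exact Finset.mem_range.2 h2
  have hsplit := Finset.card_eq_sum_card_fiberwise hfib
  have hbound : ∀ j ∈ Finset.range n,
      (A.filter fun i => blk D (w i) = j).card ≤ min s (D.rowLen j) := by
    intro j _
    apply le_min
    · rw [show s = (Finset.range s).card from (Finset.card_range s).symm]
      refine Finset.card_le_card_of_injOn (fun i => blk E (i : ℕ)) ?_ ?_
      · intro i hi
        rw [Finset.mem_coe, Finset.mem_filter, hA, Finset.mem_filter] at hi
        exact Finset.mem_range.2 hi.1.2
      · intro a ha b hb hab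
        by_contra hne
        simp only [Finset.mem_coe, Finset.mem_filter] at ha hb
        exact hc a b hne hab (ha.2.trans hb.2.symm)
    · calc (A.filter fun i => blk D (w i) = j).card
          ≤ (Finset.univ.filter fun x : Fin n => blk D x = j).card := by
            refine Finset.card_le_card_of_injOn (fun i => w i) ?_ ?_
            · intro i hi
              rw [Finset.mem_coe, Finset.mem_filter] at hi
              exact Finset.mem_filter.2 ⟨Finset.mem_univ _, hi.2⟩
            · intro a _ b _ hab
              exact w.injective hab
        _ ≤ D.rowLen j := card_blk_fiber_le D hD j
  calc psum E s = A.card := hAcard.symm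
    _ = ∑ j ∈ Finset.range n, (A.filter fun i => blk D (w i) = j).card := hsplit
    _ ≤ ∑ j ∈ Finset.range n, min s (D.rowLen j) := Finset.sum_le_sum hbound
    _ ≤ psum D.transpose s := sum_min_le D n s

/-- The Young subgroup `S_D ≅ S_{d_1} × ... × S_{d_r} ⊆ S_n` attached to a Young diagram `D`:
the permutations preserving each consecutive block of sizes `d_1, ..., d_r`. -/
def youngSubgroup (n : ℕ) (D : YoungDiagram) : Subgroup (Equiv.Perm (Fin n)) where
  carrier := {σ | ∀ i : Fin n, blk D (σ i) = blk D i}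
  one_mem' := by intro i; rfl
  mul_mem' := by
    intro a b ha hb i
    have := ha (b i)
    simp only [Equiv.Perm.mul_apply]
    rw [this, hb i]
  inv_mem' := by
    intro a ha i
    have := ha (a⁻¹ i)
    simpa using this.symm

/-- The Young module `Y_D = Ind_{S_D}^{S_n}(1)`: the complex permutation representation of
`S_n` on the cosets `S_n / S_D`. -/
def youngModule (n : ℕ) (D : YoungDiagram) : Rep ℂ (Equiv.Perm (Fin n)) :=
  Rep.ofMulAction ℂ (Equiv.Perm (Fin n)) (Equiv.Perm (Fin n) ⧸ youngSubgroup n D)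

/-- The intertwining number `⟨π, τ⟩ = dim Hom_G(π, τ)`. -/
def interNum {G : Type} [Monoid G] (π τ : Rep ℂ G) : ℕ :=
  Module.finrank ℂ (π ⟶ τ)

section Induced

variable {G : Type} [Group G] (H : Subgroup G) {W : Type} [AddCommGroup W] [Module ℂ W]

/-- The space of the induced representation `Ind_H^G(ρ)`: functions `f : G → W` with
`f(hg) = ρ(h) f(g)`. -/
def indSpace (ρ : Representation ℂ H W) : Submodule ℂ (G → W) where
  carrier := {f | ∀ (h : H) (g : G), f (↑h * g) = ρ h (f g)}
  add_mem' := by intro a b ha hb h g; simp [ha h g, hb h g]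
  zero_mem' := by intro h g; simp
  smul_mem' := by intro c a ha h g; simp [ha h g]

/-- The induced representation `Ind_H^G(ρ)`, with `G` acting by right translation on
equivariant functions `G → W`. -/
def indRep (ρ : Representation ℂ H W) : Rep ℂ G :=
  Rep.of (X := indSpace H ρ)
    { toFun := fun g =>
        { toFun := fun f => ⟨fun x => f.1 (x * g), fun h x => by
            have := f.2 h (x * g); simpa [mul_assoc] using this⟩
          map_add' := by intro a b; apply Subtype.ext; funext x; rfl
          map_smul' := by intro c a; apply Subtype.ext; funext x; rfl }
      map_one' := by
        apply LinearMap.ext; intro f; apply Subtype.ext; funext x; simp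
      map_mul' := by
        intro g₁ g₂
        apply LinearMap.ext; intro f; apply Subtype.ext; funext x
        simp [mul_assoc] }

end Induced

/-- The sign character of a subgroup of `S_n`, as a one-dimensional representation on `ℂ`. -/
def sgnRep {n : ℕ} (H : Subgroup (Equiv.Perm (Fin n))) : Representation ℂ H ℂ where
  toFun h := algebraMap ℂ (ℂ →ₗ[ℂ] ℂ) ((Equiv.Perm.sign (h : Equiv.Perm (Fin n)) : ℤ) : ℂ)
  map_one' := by simp
  map_mul' := by
    intro a b
    show algebraMap ℂ (ℂ →ₗ[ℂ] ℂ) _ = algebraMap ℂ (ℂ →ₗ[ℂ] ℂ) _ * algebraMap ℂ (ℂ →ₗ[ℂ] ℂ) _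
    rw [← map_mul]
    norm_cast
    rw [Subgroup.coe_mul, map_mul]

/-- `Ind_{S_E}^{S_n}(sgn)`, the representation of `S_n` induced from the sign character of the
Young subgroup `S_E`. -/
def sgnInduced (n : ℕ) (E : YoungDiagram) : Rep ℂ (Equiv.Perm (Fin n)) :=
  indRep (youngSubgroup n E) (sgnRep (youngSubgroup n E))



open CategoryTheory Matrix
open scoped TensorProduct


section MainProof

lemma swap_mem_youngSubgroup {n : ℕ} (C : YoungDiagram) {a b : Fin n}
    (hab : blk C a = blk C b) : Equiv.swap a b ∈ youngSubgroup n C := by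
  intro i
  rcases eq_or_ne i a with rfl | hia
  · rw [Equiv.swap_apply_left]; exact hab.symm
  rcases eq_or_ne i b with rfl | hib
  · rw [Equiv.swap_apply_right]; exact hab
  · rw [Equiv.swap_apply_of_ne_of_ne hia hib]

lemma sgnRep_apply {n : ℕ} (H : Subgroup (Equiv.Perm (Fin n))) (h : H) (v : ℂ) :
    sgnRep H h v = ((Equiv.Perm.sign (h : Equiv.Perm (Fin n)) : ℤ) : ℂ) * v := by
  simp [sgnRep, Module.algebraMap_end_apply, smul_eq_mul]

open scoped Classical in
/-- The element of the induced space supported on `S_E g`, with value `sgn(h)` at `h * g`. -/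
def delta (n : ℕ) (E : YoungDiagram) (g : Equiv.Perm (Fin n)) :
    indSpace (youngSubgroup n E) (sgnRep (youngSubgroup n E)) :=
  ⟨fun x => if x * g⁻¹ ∈ youngSubgroup n E
      then ((Equiv.Perm.sign (x * g⁻¹) : ℤ) : ℂ) else 0, by
    intro h x
    have hmem : (↑h : Equiv.Perm (Fin n)) * x * g⁻¹ ∈ youngSubgroup n E ↔
        x * g⁻¹ ∈ youngSubgroup n E := by
      rw [mul_assoc]; exact mul_mem_cancel_left h.2
    by_cases hx : x * g⁻¹ ∈ youngSubgroup n E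
    · simp only [if_pos hx, if_pos (hmem.2 hx), sgnRep_apply]
      rw [show (↑h : Equiv.Perm (Fin n)) * x * g⁻¹ = ↑h * (x * g⁻¹) from mul_assoc _ _ _,
        _root_.map_mul]
      push_cast
      ring
    · simp only [if_neg hx, if_neg (fun hc => hx (hmem.1 hc)), sgnRep_apply, mul_zero]⟩

open scoped Classical in
lemma delta_apply {n : ℕ} (E : YoungDiagram) (g x : Equiv.Perm (Fin n)) :
    (delta n E g).1 x = if x * g⁻¹ ∈ youngSubgroup n E
      then ((Equiv.Perm.sign (x * g⁻¹) : ℤ) : ℂ) else 0 := by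
  simp [delta]

lemma delta_swap_mul {n : ℕ} (E : YoungDiagram) (g τ : Equiv.Perm (Fin n))
    (hτ : τ ∈ youngSubgroup n E) (hsgn : Equiv.Perm.sign τ = -1) :
    delta n E (τ * g) = - delta n E g := by
  apply Subtype.ext
  funext x
  have hcoe : ((- delta n E g : indSpace (youngSubgroup n E)
      (sgnRep (youngSubgroup n E))) : Equiv.Perm (Fin n) → ℂ) x = - (delta n E g).1 x := rfl
  rw [hcoe, delta_apply, delta_apply]
  have hx : x * (τ * g)⁻¹ = (x * g⁻¹) * τ⁻¹ := by group
  rw [hx]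
  have hmem : (x * g⁻¹) * τ⁻¹ ∈ youngSubgroup n E ↔ x * g⁻¹ ∈ youngSubgroup n E :=
    mul_mem_cancel_right (inv_mem hτ)
  by_cases hxg : x * g⁻¹ ∈ youngSubgroup n E
  · rw [if_pos (hmem.2 hxg), if_pos hxg, _root_.map_mul, _root_.map_inv, hsgn]
    simp
  · rw [if_neg (fun hc => hxg (hmem.1 hc)), if_neg hxg, neg_zero]

lemma indRep_ρ_apply {n : ℕ} (E : YoungDiagram) (x : Equiv.Perm (Fin n))
    (f : indSpace (youngSubgroup n E) (sgnRep (youngSubgroup n E)))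
    (y : Equiv.Perm (Fin n)) :
    ((sgnInduced n E).ρ x f).1 y = (f : Equiv.Perm (Fin n) → ℂ) (y * x) := rfl

lemma rho_delta {n : ℕ} (E : YoungDiagram) (x g : Equiv.Perm (Fin n)) :
    (sgnInduced n E).ρ x (delta n E g) = delta n E (g * x⁻¹) := by
  apply Subtype.ext
  funext y
  have lhs : ((sgnInduced n E).ρ x (delta n E g)).1 y = (delta n E g).1 (y * x) :=
    indRep_ρ_apply E x (delta n E g) y
  rw [lhs, delta_apply, delta_apply]
  have hyx : y * x * g⁻¹ = y * (g * x⁻¹)⁻¹ := by group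
  rw [hyx]

open scoped Classical in
lemma delta_span {n : ℕ} (E : YoungDiagram)
    (f : indSpace (youngSubgroup n E) (sgnRep (youngSubgroup n E))) :
    ∑ g : Equiv.Perm (Fin n), (f : Equiv.Perm (Fin n) → ℂ) g • delta n E g
      = ((Finset.univ.filter fun h : Equiv.Perm (Fin n) =>
          h ∈ youngSubgroup n E).card : ℂ) • f := by
  apply Subtype.ext
  funext x
  have lhs_eval : ((∑ g : Equiv.Perm (Fin n),
      (f : Equiv.Perm (Fin n) → ℂ) g • delta n E g :
      indSpace (youngSubgroup n E) (sgnRep (youngSubgroup n E))) :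
      Equiv.Perm (Fin n) → ℂ) x
      = ∑ g : Equiv.Perm (Fin n), (f : Equiv.Perm (Fin n) → ℂ) g * (delta n E g).1 x := by
    rw [AddSubmonoidClass.coe_finset_sum]
    rw [Finset.sum_apply]
    apply Finset.sum_congr rfl
    intro g _
    rfl
  rw [lhs_eval]
  have rhs_eval : ((((Finset.univ.filter fun h : Equiv.Perm (Fin n) =>
        h ∈ youngSubgroup n E).card : ℂ) • f :
      indSpace (youngSubgroup n E) (sgnRep (youngSubgroup n E))) :
      Equiv.Perm (Fin n) → ℂ) x
      = ((Finset.univ.filter fun h : Equiv.Perm (Fin n) =>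
          h ∈ youngSubgroup n E).card : ℂ) * (f : Equiv.Perm (Fin n) → ℂ) x := rfl
  rw [rhs_eval]
  have reindex : ∑ g : Equiv.Perm (Fin n),
      (f : Equiv.Perm (Fin n) → ℂ) g * (delta n E g).1 x
      = ∑ h : Equiv.Perm (Fin n),
        (f : Equiv.Perm (Fin n) → ℂ) (h⁻¹ * x) * (delta n E (h⁻¹ * x)).1 x := by
    apply Fintype.sum_equiv ((Equiv.inv (Equiv.Perm (Fin n))).trans
      (Equiv.mulRight x)).symm
    intro g
    simp [Equiv.mulRight]
  rw [reindex]
  have term_eval : ∀ h : Equiv.Perm (Fin n),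
      (f : Equiv.Perm (Fin n) → ℂ) (h⁻¹ * x) * (delta n E (h⁻¹ * x)).1 x
      = if h ∈ youngSubgroup n E then (f : Equiv.Perm (Fin n) → ℂ) x else 0 := by
    intro h
    have hxx : x * (h⁻¹ * x)⁻¹ = h := by group
    rw [delta_apply, hxx]
    by_cases hh : h ∈ youngSubgroup n E
    · rw [if_pos hh, if_pos hh]
      have hf : (f : Equiv.Perm (Fin n) → ℂ) (h⁻¹ * x)
          = ((Equiv.Perm.sign h⁻¹ : ℤ) : ℂ) * (f : Equiv.Perm (Fin n) → ℂ) x := by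
        have := f.2 ⟨h⁻¹, inv_mem hh⟩ x
        rw [sgnRep_apply] at this
        exact this
      rw [hf]
      have hs : ((Equiv.Perm.sign h⁻¹ : ℤ) : ℂ) * ((Equiv.Perm.sign h : ℤ) : ℂ) = 1 := by
        rw [← Int.cast_mul, ← Units.val_mul, ← _root_.map_mul, inv_mul_cancel]
        simp
      rw [mul_right_comm, hs, one_mul]
    · rw [if_neg hh, if_neg hh, mul_zero]
  rw [Finset.sum_congr rfl fun h _ => term_eval h]
  rw [← Finset.sum_filter, Finset.sum_const, nsmul_eq_mul]

end MainProof

/-- For Young diagrams `D`, `E` of size `n`, the intertwining number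
`⟨Ind_{S_E}^{S_n}(sgn), Ind_{S_D}^{S_n}(1)⟩` vanishes unless `E ⪯ Dᵗ` in the dominance order. -/

theorem intertwining_zero_of_not_dominated (n : ℕ) (D E : YoungDiagram)
    (hD : D.card = n) (hE : E.card = n) (h : ¬ domLE E D.transpose) :
    interNum (sgnInduced n E) (youngModule n D) = 0 := by
  classical
  have key : ∀ T : sgnInduced n E ⟶ youngModule n D, T = 0 := by
    intro T
    have hcomm : ∀ (x : Equiv.Perm (Fin n)) (u : (sgnInduced n E).V),
        T.hom ((sgnInduced n E).ρ x u) = (youngModule n D).ρ x (T.hom u) := by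
      intro x u
      exact Rep.hom_comm_apply T x u
    have hdelta : ∀ g : Equiv.Perm (Fin n), T.hom (delta n E g) = 0 := by
      intro g
      obtain ⟨v, hv⟩ : ∃ v : MonoidAlgebra ℂ (Equiv.Perm (Fin n) ⧸ youngSubgroup n D),
          T.hom (delta n E g) = v := ⟨T.hom (delta n E g), rfl⟩
      have hveq : ∀ x : Equiv.Perm (Fin n),
          T.hom ((sgnInduced n E).ρ x (delta n E g))
            = Representation.ofMulAction ℂ (Equiv.Perm (Fin n))
              (Equiv.Perm (Fin n) ⧸ youngSubgroup n D) x v := by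
        intro x
        exact (hcomm x (delta n E g)).trans (congrArg _ hv)
      rw [hv]
      refine MonoidAlgebra.ext (Finsupp.ext ?_)
      intro q
      show v.coeff q = 0
      refine QuotientGroup.induction_on q ?_
      intro k
      obtain ⟨a, b, hab, hEab, hDab⟩ := exists_same_blk D E hD hE h ((g * k)⁻¹)
      set τ := Equiv.swap a b with hτdef
      have hτE : τ ∈ youngSubgroup n E := swap_mem_youngSubgroup E hEab
      have hτsgn : Equiv.Perm.sign τ = -1 := Equiv.Perm.sign_swap hab
      have hτinv : τ⁻¹ = τ := Equiv.swap_inv a b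
      have hconj : (g * k)⁻¹ * τ * (g * k) ∈ youngSubgroup n D := by
        have hs : (g * k)⁻¹ * τ * ((g * k)⁻¹)⁻¹
            = Equiv.swap ((g * k)⁻¹ a) ((g * k)⁻¹ b) :=
          (Equiv.swap_apply_apply _ a b).symm
        rw [inv_inv] at hs
        rw [hs]
        exact swap_mem_youngSubgroup D hDab
      set x : Equiv.Perm (Fin n) := g⁻¹ * τ * g with hxdef
      have h1 : delta n E (τ * g) = - delta n E g := delta_swap_mul E g τ hτE hτsgn
      have hgx : g * x⁻¹ = τ * g := by
        rw [hxdef, _root_.mul_inv_rev, _root_.mul_inv_rev, inv_inv, hτinv]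
        group
      have h2 : (sgnInduced n E).ρ x (delta n E g) = delta n E (τ * g) := by
        rw [rho_delta, hgx]
      have e2 := hveq x
      rw [h2, h1] at e2
      erw [map_neg, hv] at e2
      have e2' : -v = Representation.ofMulAction ℂ (Equiv.Perm (Fin n))
          (Equiv.Perm (Fin n) ⧸ youngSubgroup n D) x v := e2
      have e3 : (-v).coeff (k : Equiv.Perm (Fin n) ⧸ youngSubgroup n D)
          = (Representation.ofMulAction ℂ (Equiv.Perm (Fin n))
            (Equiv.Perm (Fin n) ⧸ youngSubgroup n D) x v).coeff k := by rw [e2']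
      rw [MonoidAlgebra.coeff_neg, Finsupp.neg_apply, Representation.coeff_ofMulAction] at e3
      have h5 : (x⁻¹ • ((k : Equiv.Perm (Fin n)) :
          Equiv.Perm (Fin n) ⧸ youngSubgroup n D)) = ↑k := by
        show ((x⁻¹ * k : Equiv.Perm (Fin n)) :
          Equiv.Perm (Fin n) ⧸ youngSubgroup n D) = ↑k
        have hx5 : x⁻¹ * k = k * ((g * k)⁻¹ * τ * (g * k)) := by
          rw [hxdef, _root_.mul_inv_rev, _root_.mul_inv_rev, inv_inv, hτinv]
          group
        rw [hx5]
        exact QuotientGroup.mk_mul_of_mem k hconj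
      rw [h5] at e3
      linear_combination (-(1 : ℂ)/2) * e3
    have hzero : ∀ f : indSpace (youngSubgroup n E) (sgnRep (youngSubgroup n E)),
        T.hom f = 0 := by
      intro f
      have hspan := delta_span E f
      set c := (Finset.univ.filter fun h : Equiv.Perm (Fin n) =>
        h ∈ youngSubgroup n E).card with hcdef
      have hcpos : 0 < c :=
        Finset.card_pos.2 ⟨1, Finset.mem_filter.2 ⟨Finset.mem_univ _, one_mem _⟩⟩
      have hc : (c : ℂ) ≠ 0 := by exact_mod_cast hcpos.ne'
      have hf : f = (c : ℂ)⁻¹ • ∑ g : Equiv.Perm (Fin n),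
          (f : Equiv.Perm (Fin n) → ℂ) g • delta n E g := by
        rw [hspan, smul_smul, inv_mul_cancel₀ hc, one_smul]
      have hz : ∀ g : Equiv.Perm (Fin n), T.hom (((f : Equiv.Perm (Fin n) → ℂ) g • delta n E g :
          indSpace (youngSubgroup n E) (sgnRep (youngSubgroup n E)))) = 0 := by
        intro g
        erw [_root_.map_smul, hdelta, smul_zero]
      rw [hf]
      erw [_root_.map_smul, map_sum, Finset.sum_eq_zero (fun g _ => hz g), smul_zero]
    apply Rep.hom_ext
    rw [Rep.zero_hom]
    apply Representation.IntertwiningMap.ext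
    apply LinearMap.ext
    intro f
    simpa using hzero f
  haveI : Subsingleton (sgnInduced n E ⟶ youngModule n D) :=
    ⟨fun a b => (key a).trans (key b).symm⟩
  show Module.finrank ℂ _ = 0
  exact Module.finrank_zero_of_subsingleton
end PieriGL
end
end

section
/- For 0 ≤ k, k' ≤ n/2, the intertwining number of the Young modules attached to the two-row partitions (n−k, k) and (n−k', k') of n equals min(k, k') + 1. -/
noncomputable section

open CategoryTheory Equiv

namespace PieriGL

open CategoryTheory Matrix
open scoped TensorProduct

/-- The set of `k`-element subsets of `{1, ..., n}`, acted on by `S_n`. -/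
def KSubsets (n k : ℕ) : Type := {s : Finset (Fin n) // s.card = k}

instance (n k : ℕ) : MulAction (Equiv.Perm (Fin n)) (KSubsets n k) where
  smul σ s := ⟨s.1.map σ.toEmbedding, by rw [Finset.card_map]; exact s.2⟩
  one_smul s := by
    apply Subtype.ext
    show Finset.map _ _ = _
    ext x
    simp [Finset.mem_map]
    exact Iff.rfl
  mul_smul σ τ s := by
    apply Subtype.ext
    show s.1.map (σ * τ).toEmbedding = (s.1.map τ.toEmbedding).map σ.toEmbedding
    rw [Finset.map_map]
    rfl

/-- The Young module attached to the two-row partition `(n-k, k)`, realized as the complex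
permutation representation of `S_n` on `k`-element subsets of an `n`-element set. -/
def twoRowModule (n k : ℕ) : Rep ℂ (Equiv.Perm (Fin n)) :=
  Rep.ofMulAction ℂ (Equiv.Perm (Fin n)) (KSubsets n k)



/-! ### Auxiliary material for the proof of `twoRow_intertwining` -/

instance (n k : ℕ) : Finite (KSubsets n k) := by unfold KSubsets; infer_instance

section HomEquiv

variable {G : Type} [Group G] {X Y : Type} [MulAction G X] [MulAction G Y]

/-- G-invariant functions on `X × Y`. -/
def invSub (G : Type) [Group G] (X Y : Type) [MulAction G X] [MulAction G Y] :
    Submodule ℂ (X × Y → ℂ) where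
  carrier := {f | ∀ (g : G) (p : X × Y), f (g • p) = f p}
  add_mem' := by intro a b ha hb g p; simp [ha g p, hb g p]
  zero_mem' := by intro g p; rfl
  smul_mem' := by intro c a ha g p; simp [ha g p]

def homLin (T : Rep.ofMulAction ℂ G X ⟶ Rep.ofMulAction ℂ G Y) :
    (X →₀ ℂ) →ₗ[ℂ] (Y →₀ ℂ) :=
  (MonoidAlgebra.coeffLinearEquiv ℂ).toLinearMap ∘ₗ T.hom.toLinearMap ∘ₗ
    (MonoidAlgebra.coeffLinearEquiv ℂ).symm.toLinearMap

/-- The permutation action on `X →₀ ℂ`. -/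
def actF (G X : Type) [Group G] [MulAction G X] (g : G) : (X →₀ ℂ) →ₗ[ℂ] (X →₀ ℂ) :=
  Finsupp.lmapDomain ℂ ℂ (g • · : X → X)

theorem actF_single (g : G) (x : X) (r : ℂ) :
    actF G X g (Finsupp.single x r) = Finsupp.single (g • x) r := by
  simp [actF, Finsupp.mapDomain_single]

theorem actF_apply (g : G) (v : X →₀ ℂ) (y : X) : actF G X g v y = v (g⁻¹ • y) := by
  have h : y = g • (g⁻¹ • y) := (smul_inv_smul g y).symm
  conv_lhs => rw [h]
  exact Finsupp.mapDomain_apply (MulAction.injective g) v _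

theorem homLin_comm (T : Rep.ofMulAction ℂ G X ⟶ Rep.ofMulAction ℂ G Y) (g : G) (v : X →₀ ℂ) :
    homLin T (actF G X g v)
      = actF G Y g (homLin T v) := by
  exact congrArg MonoidAlgebra.coeff (Rep.hom_comm_apply T g (MonoidAlgebra.ofCoeff v))

theorem homFn_invariant (T : Rep.ofMulAction ℂ G X ⟶ Rep.ofMulAction ℂ G Y) (g : G)
    (p : X × Y) : (homLin T (Finsupp.single (g • p).1 1)) (g • p).2
      = (homLin T (Finsupp.single p.1 1)) p.2 := by
  have h1 : Finsupp.single ((g • p).1) (1:ℂ)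
      = actF G X g (Finsupp.single p.1 1) :=
    (actF_single g p.1 1).symm
  rw [h1, homLin_comm, actF_apply]
  show (homLin T (Finsupp.single p.1 1)) (g⁻¹ • g • p.2) = _
  rw [inv_smul_smul]

variable [Finite Y]

def mkLin (f : X × Y → ℂ) : (X →₀ ℂ) →ₗ[ℂ] (Y →₀ ℂ) :=
  (Finsupp.linearEquivFunOnFinite ℂ ℂ Y).symm.toLinearMap.comp
    (Finsupp.lsum ℂ fun x => LinearMap.toSpanSingleton ℂ (Y → ℂ) (fun y => f (x, y)))

theorem mkLin_single (f : X × Y → ℂ) (x : X) (c : ℂ) (y : Y) :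
    mkLin f (Finsupp.single x c) y = c * f (x, y) := by
  simp only [mkLin, LinearMap.comp_apply, Finsupp.lsum_single,
    LinearMap.toSpanSingleton_apply, LinearEquiv.coe_coe]
  show (Finsupp.equivFunOnFinite.symm (c • fun y => f (x, y))) y = c * f (x, y)
  simp [Finsupp.equivFunOnFinite]
  rfl

theorem mkLin_comm (f : X × Y → ℂ) (hf : ∀ (g : G) (p : X × Y), f (g • p) = f p) (g : G) :
    (mkLin f).comp (actF G X g)
      = (actF G Y g).comp (mkLin f) := by
  apply Finsupp.lhom_ext
  intro x c
  simp only [LinearMap.comp_apply, actF_single]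
  apply Finsupp.ext
  intro y
  rw [mkLin_single, actF_apply, mkLin_single]
  have := hf g (x, g⁻¹ • y)
  simp only [Prod.smul_mk, smul_inv_smul] at this
  rw [this]

/-- `Hom_G(ℂ[X], ℂ[Y])` is linearly equivalent to the space of `G`-invariant functions on
`X × Y`. -/
def homEquiv : (Rep.ofMulAction ℂ G X ⟶ Rep.ofMulAction ℂ G Y) ≃ₗ[ℂ] invSub G X Y where
  toFun T := ⟨fun p => (homLin T (Finsupp.single p.1 1)) p.2, fun g p => homFn_invariant T g p⟩
  map_add' T T' := rfl
  map_smul' c T := by apply Subtype.ext; funext p; rfl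
  invFun f := Rep.ofHom ⟨(MonoidAlgebra.coeffLinearEquiv ℂ).symm.toLinearMap ∘ₗ mkLin f.1 ∘ₗ
      (MonoidAlgebra.coeffLinearEquiv ℂ).toLinearMap, fun g => by
    apply LinearMap.ext; intro v
    exact congrArg MonoidAlgebra.ofCoeff (DFunLike.congr_fun (mkLin_comm f.1 f.2 g) v.coeff)⟩
  left_inv T := by
    apply Rep.hom_ext
    apply Representation.IntertwiningMap.ext
    apply LinearMap.ext; intro v
    refine congrArg MonoidAlgebra.ofCoeff (DFunLike.congr_fun (?_ : mkLin _ = homLin T) v.coeff)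
    apply Finsupp.lhom_ext
    intro x c
    apply Finsupp.ext
    intro y
    rw [mkLin_single]
    have : Finsupp.single x c = c • Finsupp.single x (1:ℂ) := by
      rw [Finsupp.smul_single, smul_eq_mul, mul_one]
    rw [this, _root_.map_smul, Finsupp.smul_apply, smul_eq_mul]
  right_inv f := by
    apply Subtype.ext
    funext p
    show mkLin f.1 (Finsupp.single p.1 1) p.2 = f.1 p
    rw [mkLin_single, one_mul]

/-- Invariant functions correspond to functions on the orbit space. -/
def invQuotEquiv : invSub G X Y ≃ₗ[ℂ] (Quotient (MulAction.orbitRel G (X × Y)) → ℂ) where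
  toFun f := Quotient.lift (fun p => f.1 p) (by
    rintro a b ⟨g, rfl⟩
    exact f.2 g b)
  map_add' a b := by funext q; induction q using Quotient.inductionOn; rfl
  map_smul' c a := by funext q; induction q using Quotient.inductionOn; rfl
  invFun h := ⟨fun p => h ⟦p⟧, fun g p => congrArg h (Quotient.sound ⟨g, rfl⟩)⟩
  left_inv f := rfl
  right_inv h := by funext q; induction q using Quotient.inductionOn; rfl

end HomEquiv

theorem exists_perm_comp {α β : Type*} [Fintype α] [DecidableEq α] [DecidableEq β] (f g : α → β)
    (h : ∀ b, (Finset.univ.filter (f · = b)).card = (Finset.univ.filter (g · = b)).card) :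
    ∃ σ : Equiv.Perm α, ∀ x, f (σ x) = g x := by
  have e : ∀ b, {x // g x = b} ≃ {x // f x = b} := fun b => by
    apply Fintype.equivOfCardEq
    rw [Fintype.card_subtype, Fintype.card_subtype]
    exact (h b).symm
  refine ⟨(Equiv.sigmaFiberEquiv g).symm.trans
    ((Equiv.sigmaCongrRight e).trans (Equiv.sigmaFiberEquiv f)), fun x => ?_⟩
  have h1 : (Equiv.sigmaFiberEquiv g).symm x = ⟨g x, x, rfl⟩ := rfl
  simp only [Equiv.trans_apply, h1]
  exact (e (g x) ⟨x, rfl⟩).2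

theorem exists_perm_pair {n : ℕ} (A A' B B' : Finset (Fin n))
    (hA : A.card = A'.card) (hB : B.card = B'.card)
    (hI : (A ∩ B).card = (A' ∩ B').card) :
    ∃ σ : Equiv.Perm (Fin n), (∀ x, x ∈ A' ↔ σ x ∈ A) ∧ (∀ x, x ∈ B' ↔ σ x ∈ B) := by
  set f : Fin n → Bool × Bool := fun x => (decide (x ∈ A), decide (x ∈ B)) with hf
  set g : Fin n → Bool × Bool := fun x => (decide (x ∈ A'), decide (x ∈ B')) with hg
  have key : ∀ b, (Finset.univ.filter (f · = b)).card = (Finset.univ.filter (g · = b)).card := by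
    have e1 : Finset.univ.filter (f · = (true, true)) = A ∩ B := by
      ext x; simp [hf, Prod.ext_iff]
    have e1' : Finset.univ.filter (g · = (true, true)) = A' ∩ B' := by
      ext x; simp [hg, Prod.ext_iff]
    have e2 : Finset.univ.filter (f · = (true, false)) = A \ B := by
      ext x; simp [hf, Prod.ext_iff]
    have e2' : Finset.univ.filter (g · = (true, false)) = A' \ B' := by
      ext x; simp [hg, Prod.ext_iff]
    have e3 : Finset.univ.filter (f · = (false, true)) = B \ A := by
      ext x; simp [hf, Prod.ext_iff, and_comm]
    have e3' : Finset.univ.filter (g · = (false, true)) = B' \ A' := by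
      ext x; simp [hg, Prod.ext_iff, and_comm]
    have e4 : Finset.univ.filter (f · = (false, false)) = (A ∪ B)ᶜ := by
      ext x; simp [hf, Prod.ext_iff]
    have e4' : Finset.univ.filter (g · = (false, false)) = (A' ∪ B')ᶜ := by
      ext x; simp [hg, Prod.ext_iff]
    have cAB : (A \ B).card = A.card - (A ∩ B).card := by
      have := Finset.card_inter_add_card_sdiff A B; omega
    have cAB' : (A' \ B').card = A'.card - (A' ∩ B').card := by
      have := Finset.card_inter_add_card_sdiff A' B'; omega
    have cBA : (B \ A).card = B.card - (A ∩ B).card := by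
      have := Finset.card_inter_add_card_sdiff B A
      rw [Finset.inter_comm] at this; omega
    have cBA' : (B' \ A').card = B'.card - (A' ∩ B').card := by
      have := Finset.card_inter_add_card_sdiff B' A'
      rw [Finset.inter_comm] at this; omega
    have cU : (A ∪ B).card = A.card + B.card - (A ∩ B).card := by
      have := Finset.card_union_add_card_inter A B; omega
    have cU' : (A' ∪ B').card = A'.card + B'.card - (A' ∩ B').card := by
      have := Finset.card_union_add_card_inter A' B'; omega
    rintro ⟨a | a, b | b⟩
    · rw [e4, e4', Finset.card_compl, Finset.card_compl, cU, cU', hA, hB, hI]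
    · rw [e3, e3', cBA, cBA', hB, hI]
    · rw [e2, e2', cAB, cAB', hA, hI]
    · rw [e1, e1', hI]
  obtain ⟨σ, hσ⟩ := exists_perm_comp f g key
  refine ⟨σ, fun x => ?_, fun x => ?_⟩
  · have := congrArg Prod.fst (hσ x); simp [hf, hg] at this; exact this.symm
  · have := congrArg Prod.snd (hσ x); simp [hf, hg] at this; exact this.symm

theorem interCard_smul {n k k' : ℕ} (σ : Equiv.Perm (Fin n))
    (p : KSubsets n k × KSubsets n k') :
    ((σ • p).1.1 ∩ (σ • p).2.1).card = (p.1.1 ∩ p.2.1).card := by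
  show ((p.1.1.map σ.toEmbedding) ∩ (p.2.1.map σ.toEmbedding)).card = _
  rw [← Finset.map_inter, Finset.card_map]

def pairQuot (n k k' : ℕ) : Type :=
  Quotient (MulAction.orbitRel (Equiv.Perm (Fin n)) (KSubsets n k × KSubsets n k'))

/-- Orbits of pairs of subsets are classified by the intersection cardinality. -/
def qEquiv (n k k' : ℕ) (hk : 2 * k ≤ n) (hk' : 2 * k' ≤ n) :
    pairQuot n k k' ≃ Fin (min k k' + 1) := by
  refine Equiv.ofBijective (Quotient.lift
    (fun p => (⟨(p.1.1 ∩ p.2.1).card, ?_⟩ : Fin (min k k' + 1))) ?_) ⟨?_, ?_⟩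
  · have h1 : (p.1.1 ∩ p.2.1).card ≤ p.1.1.card :=
      Finset.card_le_card Finset.inter_subset_left
    have h2 : (p.1.1 ∩ p.2.1).card ≤ p.2.1.card :=
      Finset.card_le_card Finset.inter_subset_right
    rw [p.1.2] at h1; rw [p.2.2] at h2; omega
  · rintro a b ⟨σ, rfl⟩
    exact Fin.ext (interCard_smul σ b)
  · rintro ⟨p⟩ ⟨q⟩ h
    have hcard : (p.1.1 ∩ p.2.1).card = (q.1.1 ∩ q.2.1).card := congrArg Fin.val h
    obtain ⟨σ, hA, hB⟩ := exists_perm_pair p.1.1 q.1.1 p.2.1 q.2.1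
      (p.1.2.trans q.1.2.symm) (p.2.2.trans q.2.2.symm) hcard
    apply Quotient.sound
    refine ⟨σ, ?_⟩
    apply Prod.ext
    · apply Subtype.ext
      show q.1.1.map σ.toEmbedding = p.1.1
      ext x
      simp only [Finset.mem_map_equiv, hA, Equiv.apply_symm_apply]
    · apply Subtype.ext
      show q.2.1.map σ.toEmbedding = p.2.1
      ext x
      simp only [Finset.mem_map_equiv, hB, Equiv.apply_symm_apply]
  · rintro ⟨i, hi⟩
    have hik : i ≤ k ∧ i ≤ k' := by omega
    have hA : ∀ m ∈ Finset.range k, m < n := by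
      intro m hm; rw [Finset.mem_range] at hm; omega
    have hB : ∀ m ∈ Finset.Ico (k - i) (k - i + k'), m < n := by
      intro m hm; rw [Finset.mem_Ico] at hm; omega
    refine ⟨Quotient.mk _ (⟨(Finset.range k).attachFin hA, ?_⟩,
      ⟨(Finset.Ico (k - i) (k - i + k')).attachFin hB, ?_⟩), ?_⟩
    · rw [Finset.card_attachFin, Finset.card_range]
    · rw [Finset.card_attachFin, Nat.card_Ico]; omega
    · apply Fin.ext
      show (((Finset.range k).attachFin hA)
          ∩ ((Finset.Ico (k - i) (k - i + k')).attachFin hB)).card = i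
      have hC : ∀ m ∈ Finset.Ico (k - i) k, m < n := by
        intro m hm; rw [Finset.mem_Ico] at hm; omega
      have heq : ((Finset.range k).attachFin hA)
          ∩ ((Finset.Ico (k - i) (k - i + k')).attachFin hB)
          = (Finset.Ico (k - i) k).attachFin hC := by
        ext x
        simp only [Finset.mem_inter, Finset.mem_attachFin, Finset.mem_range, Finset.mem_Ico]
        omega
      rw [heq, Finset.card_attachFin, Nat.card_Ico]; omega

/-- For `0 ≤ k, k' ≤ n/2`, the intertwining number of the Young modules of the
two-row partitions `(n-k, k)` and `(n-k', k')` is `min k k' + 1`. -/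
theorem twoRow_intertwining (n k k' : ℕ) (hk : 2 * k ≤ n) (hk' : 2 * k' ≤ n) :
    interNum (twoRowModule n k) (twoRowModule n k') = min k k' + 1 := by
  have E : (twoRowModule n k ⟶ twoRowModule n k') ≃ₗ[ℂ] (Fin (min k k' + 1) → ℂ) :=
    ((homEquiv (G := Equiv.Perm (Fin n)) (X := KSubsets n k) (Y := KSubsets n k')).trans
      invQuotEquiv).trans
      (LinearEquiv.funCongrLeft ℂ ℂ (qEquiv n k k' hk hk')).symm
  exact E.finrank_eq.trans (Module.finrank_fin_fun ℂ)
end PieriGL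
end
end

section
/- For 0 ≤ k with k + 1 ≤ n/2, the Young module of S_n attached to the partition (n−k, k) is isomorphic to a subrepresentation of the Young module attached to (n−k−1, k+1). -/
noncomputable section

open CategoryTheory Equiv

namespace PieriGL

open CategoryTheory Matrix
open scoped TensorProduct

section Aux

instance (n k : ℕ) : Fintype (KSubsets n k) := by unfold KSubsets; infer_instance
instance (n k : ℕ) : DecidableEq (KSubsets n k) := by unfold KSubsets; infer_instance

lemma smul_val {n k : ℕ} (σ : Equiv.Perm (Fin n)) (s : KSubsets n k) :
    (σ • s).1 = s.1.map σ.toEmbedding := rfl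

/-- The "up" map sending a `k`-subset to the sum of the `(k+1)`-subsets containing it
(written in terms of coefficient functions). -/
def up (n k : ℕ) : (KSubsets n k →₀ ℂ) →ₗ[ℂ] (KSubsets n (k+1) →₀ ℂ) where
  toFun f := Finsupp.equivFunOnFinite.symm fun t =>
    ∑ s : KSubsets n k, if s.1 ⊆ t.1 then f s else 0
  map_add' f g := by
    ext t
    simp only [Finsupp.coe_equivFunOnFinite_symm, Finsupp.coe_add, Pi.add_apply]
    rw [← Finset.sum_add_distrib]
    exact Finset.sum_congr rfl fun s _ => by split <;> simp
  map_smul' c f := by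
    ext t
    simp only [Finsupp.coe_equivFunOnFinite_symm, Finsupp.coe_smul, Pi.smul_apply,
      RingHom.id_apply, smul_eq_mul]
    rw [Finset.mul_sum]
    exact Finset.sum_congr rfl fun s _ => by split <;> simp

lemma up_apply (n k : ℕ) (f : KSubsets n k →₀ ℂ) (t : KSubsets n (k+1)) :
    up n k f t = ∑ s : KSubsets n k, if s.1 ⊆ t.1 then f s else 0 := by
  simp [up]

/-- The "down" map, adjoint to `up`. -/
def down (n k : ℕ) : (KSubsets n (k+1) →₀ ℂ) →ₗ[ℂ] (KSubsets n k →₀ ℂ) where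
  toFun g := Finsupp.equivFunOnFinite.symm fun s =>
    ∑ t : KSubsets n (k+1), if s.1 ⊆ t.1 then g t else 0
  map_add' f g := by
    ext t
    simp only [Finsupp.coe_equivFunOnFinite_symm, Finsupp.coe_add, Pi.add_apply]
    rw [← Finset.sum_add_distrib]
    exact Finset.sum_congr rfl fun s _ => by split <;> simp
  map_smul' c f := by
    ext t
    simp only [Finsupp.coe_equivFunOnFinite_symm, Finsupp.coe_smul, Pi.smul_apply,
      RingHom.id_apply, smul_eq_mul]
    rw [Finset.mul_sum]
    exact Finset.sum_congr rfl fun s _ => by split <;> simp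

lemma down_apply (n k : ℕ) (g : KSubsets n (k+1) →₀ ℂ) (s : KSubsets n k) :
    down n k g s = ∑ t : KSubsets n (k+1), if s.1 ⊆ t.1 then g t else 0 := by
  simp [down]

/-- The standard hermitian inner product on coefficient functions. -/
def ip {α : Type} [Fintype α] (f g : α →₀ ℂ) : ℂ :=
  ∑ a, (starRingEnd ℂ) (f a) * g a

lemma ip_self (α : Type) [Fintype α] (f : α →₀ ℂ) :
    ip f f = ((∑ a, Complex.normSq (f a) : ℝ) : ℂ) := by
  simp only [ip, ← Complex.normSq_eq_conj_mul_self, Complex.ofReal_sum]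

lemma eq_zero_of_sum_normSq (α : Type) [Fintype α] (f : α →₀ ℂ)
    (h : (∑ a, Complex.normSq (f a) : ℝ) = 0) : f = 0 := by
  have h0 : ∀ a ∈ (Finset.univ : Finset α), Complex.normSq (f a) = 0 :=
    (Finset.sum_eq_zero_iff_of_nonneg (fun a _ => Complex.normSq_nonneg (f a))).1 h
  ext a
  simpa using Complex.normSq_eq_zero.1 (h0 a (Finset.mem_univ a))

end Aux
section Counting

lemma card_supersets (n K : ℕ) (A : Finset (Fin n)) (hA : A.card ≤ K) :
    (Finset.univ.filter (fun t : KSubsets n K => A ⊆ t.1)).card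
      = (n - A.card).choose (K - A.card) := by
  have hc : (Aᶜ : Finset (Fin n)).card = n - A.card := by
    simp [Finset.card_compl]
  rw [← hc, ← Finset.card_powersetCard]
  refine Finset.card_bij' (fun t _ => t.1 \ A)
    (fun B hB => ⟨A ∪ B, ?_⟩) ?_ ?_ ?_ ?_
  · rcases Finset.mem_powersetCard.1 hB with ⟨hBsub, hBcard⟩
    have hdisj : Disjoint A B := by
      refine Finset.disjoint_left.2 fun x hxA hxB => ?_
      exact (Finset.mem_compl.1 (hBsub hxB)) hxA
    rw [Finset.card_union_of_disjoint hdisj, hBcard]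
    omega
  · intro t ht
    rcases Finset.mem_filter.1 ht with ⟨-, hsub⟩
    refine Finset.mem_powersetCard.2 ⟨?_, ?_⟩
    · intro x hx
      exact Finset.mem_compl.2 fun hxA => (Finset.mem_sdiff.1 hx).2 hxA
    · rw [Finset.card_sdiff_of_subset hsub, t.2]
  · intro B hB
    exact Finset.mem_filter.2 ⟨Finset.mem_univ _, Finset.subset_union_left⟩
  · intro t ht
    rcases Finset.mem_filter.1 ht with ⟨-, hsub⟩
    exact Subtype.ext (Finset.union_sdiff_of_subset hsub)
  · intro B hB
    rcases Finset.mem_powersetCard.1 hB with ⟨hBsub, hBcard⟩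
    have hdisj : Disjoint A B := by
      refine Finset.disjoint_left.2 fun x hxA hxB => ?_
      exact (Finset.mem_compl.1 (hBsub hxB)) hxA
    exact Finset.union_sdiff_cancel_left hdisj

lemma supersets_empty (n K : ℕ) (A : Finset (Fin n)) (hA : K < A.card) :
    (Finset.univ.filter (fun t : KSubsets n K => A ⊆ t.1)) = ∅ := by
  rw [Finset.filter_eq_empty_iff]
  intro t _ hsub
  have h1 := Finset.card_le_card hsub
  have h2 := t.2
  omega

lemma card_subsets (n m : ℕ) (B : Finset (Fin n)) :
    (Finset.univ.filter (fun r : KSubsets n m => r.1 ⊆ B)).card = B.card.choose m := by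
  rw [← Finset.card_powersetCard]
  refine Finset.card_bij' (fun r _ => r.1)
    (fun C hC => ⟨C, (Finset.mem_powersetCard.1 hC).2⟩) ?_ ?_ ?_ ?_
  · intro r hr
    exact Finset.mem_powersetCard.2 ⟨(Finset.mem_filter.1 hr).2, r.2⟩
  · intro C hC
    exact Finset.mem_filter.2 ⟨Finset.mem_univ _, (Finset.mem_powersetCard.1 hC).1⟩
  · intro r _; rfl
  · intro C _; rfl

/-- Key counting identity. -/
lemma count_identity (n m : ℕ) (h : 2 * (m + 1) ≤ n) (s s' : KSubsets n (m+1)) :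
    (Finset.univ.filter (fun t : KSubsets n (m+1+1) => s.1 ∪ s'.1 ⊆ t.1)).card
      = (Finset.univ.filter (fun r : KSubsets n m => r.1 ⊆ s.1 ∩ s'.1)).card
        + (if s = s' then n - 2 * (m + 1) else 0) := by
  by_cases hss : s = s'
  · subst hss
    simp only [Finset.union_self, Finset.inter_self, if_pos rfl]
    rw [card_supersets n (m+2) s.1 (by rw [s.2]; omega), card_subsets n m s.1, s.2]
    have h1 : (m + 2) - (m + 1) = 1 := by omega
    rw [h1, Nat.choose_one_right]
    have h2 : (m+1).choose m = m + 1 := by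
      have := Nat.succ_sub_one m
      rw [← Nat.choose_symm (by omega : m ≤ m + 1)]
      simp
    rw [h2]
    simp only [if_true]
    omega
  · simp only [if_neg hss, Nat.add_zero]
    have hcards : s.1.card = m + 1 := s.2
    have hcards' : s'.1.card = m + 1 := s'.2
    have hne : s.1 ≠ s'.1 := fun hv => hss (Subtype.ext hv)
    have hu : m + 2 ≤ (s.1 ∪ s'.1).card := by
      by_contra hlt
      push_neg at hlt
      have h1 : s.1 ⊆ s.1 ∪ s'.1 := Finset.subset_union_left
      have h2 : s.1.card ≤ (s.1 ∪ s'.1).card := Finset.card_le_card h1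
      have h3 : s.1 = s.1 ∪ s'.1 := Finset.eq_of_subset_of_card_le h1 (by omega)
      have h4 : s'.1 ⊆ s.1 := by rw [h3]; exact Finset.subset_union_right
      exact hne (Finset.eq_of_subset_of_card_le h4 (by omega)).symm
    have hsum : (s.1 ∪ s'.1).card + (s.1 ∩ s'.1).card = 2 * (m + 1) := by
      have := Finset.card_union_add_card_inter s.1 s'.1
      omega
    by_cases hu2 : (s.1 ∪ s'.1).card = m + 2
    · rw [card_supersets n (m+2) _ (by omega), card_subsets n m, hu2]
      have hint : (s.1 ∩ s'.1).card = m := by omega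
      rw [hint]
      simp
    · have hbig : m + 2 < (s.1 ∪ s'.1).card := by omega
      rw [supersets_empty n (m+2) _ hbig, card_subsets n m]
      have hint : (s.1 ∩ s'.1).card < m := by omega
      simp [Nat.choose_eq_zero_of_lt hint]

end Counting
section Analytic

lemma ip_up (n k : ℕ) (f : KSubsets n k →₀ ℂ) :
    ip (up n k f) (up n k f)
      = ∑ s : KSubsets n k, ∑ s' : KSubsets n k,
          (((Finset.univ.filter (fun t : KSubsets n (k+1) => s.1 ∪ s'.1 ⊆ t.1)).card : ℕ) : ℂ)
            * ((starRingEnd ℂ) (f s) * f s') := by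
  unfold ip
  simp only [up_apply, map_sum, apply_ite (starRingEnd ℂ), map_zero, Finset.sum_mul_sum]
  rw [Finset.sum_comm]
  refine Finset.sum_congr rfl fun s _ => ?_
  rw [Finset.sum_comm]
  refine Finset.sum_congr rfl fun s' _ => ?_
  have heach : ∀ t : KSubsets n (k+1),
      (if s.1 ⊆ t.1 then (starRingEnd ℂ) (f s) else 0) * (if s'.1 ⊆ t.1 then f s' else 0)
        = if s.1 ∪ s'.1 ⊆ t.1 then (starRingEnd ℂ) (f s) * f s' else 0 := by
    intro t
    by_cases h1 : s.1 ⊆ t.1 <;> by_cases h2 : s'.1 ⊆ t.1 <;>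
      simp [h1, h2, Finset.union_subset_iff]
  calc (∑ t : KSubsets n (k+1),
        (if s.1 ⊆ t.1 then (starRingEnd ℂ) (f s) else 0) * (if s'.1 ⊆ t.1 then f s' else 0))
      = ∑ t : KSubsets n (k+1),
        if s.1 ∪ s'.1 ⊆ t.1 then (starRingEnd ℂ) (f s) * f s' else 0 :=
        Finset.sum_congr rfl fun t _ => heach t
    _ = _ := by
        rw [← Finset.sum_filter, Finset.sum_const, nsmul_eq_mul]

lemma ip_down (n k : ℕ) (f : KSubsets n (k+1) →₀ ℂ) :
    ip (down n k f) (down n k f)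
      = ∑ s : KSubsets n (k+1), ∑ s' : KSubsets n (k+1),
          (((Finset.univ.filter (fun r : KSubsets n k => r.1 ⊆ s.1 ∩ s'.1)).card : ℕ) : ℂ)
            * ((starRingEnd ℂ) (f s) * f s') := by
  unfold ip
  simp only [down_apply, map_sum, apply_ite (starRingEnd ℂ), map_zero, Finset.sum_mul_sum]
  rw [Finset.sum_comm]
  refine Finset.sum_congr rfl fun s _ => ?_
  rw [Finset.sum_comm]
  refine Finset.sum_congr rfl fun s' _ => ?_
  have heach : ∀ r : KSubsets n k,
      (if r.1 ⊆ s.1 then (starRingEnd ℂ) (f s) else 0) * (if r.1 ⊆ s'.1 then f s' else 0)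
        = if r.1 ⊆ s.1 ∩ s'.1 then (starRingEnd ℂ) (f s) * f s' else 0 := by
    intro r
    by_cases h1 : r.1 ⊆ s.1 <;> by_cases h2 : r.1 ⊆ s'.1 <;>
      simp [h1, h2, Finset.subset_inter_iff]
  calc (∑ r : KSubsets n k,
        (if r.1 ⊆ s.1 then (starRingEnd ℂ) (f s) else 0) * (if r.1 ⊆ s'.1 then f s' else 0))
      = ∑ r : KSubsets n k,
        if r.1 ⊆ s.1 ∩ s'.1 then (starRingEnd ℂ) (f s) * f s' else 0 :=
        Finset.sum_congr rfl fun r _ => heach r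
    _ = _ := by
        rw [← Finset.sum_filter, Finset.sum_const, nsmul_eq_mul]

lemma key_identity (n m : ℕ) (h : 2 * (m + 1) ≤ n) (f : KSubsets n (m+1) →₀ ℂ) :
    ip (up n (m+1) f) (up n (m+1) f)
      = ip (down n m f) (down n m f) + ((n - 2 * (m+1) : ℕ) : ℂ) * ip f f := by
  rw [ip_up, ip_down]
  have step : ∀ s s' : KSubsets n (m+1),
      (((Finset.univ.filter (fun t : KSubsets n (m+1+1) => s.1 ∪ s'.1 ⊆ t.1)).card : ℕ) : ℂ)
          * ((starRingEnd ℂ) (f s) * f s')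
        = (((Finset.univ.filter (fun r : KSubsets n m => r.1 ⊆ s.1 ∩ s'.1)).card : ℕ) : ℂ)
            * ((starRingEnd ℂ) (f s) * f s')
          + (if s = s' then ((n - 2 * (m+1) : ℕ) : ℂ) else 0)
            * ((starRingEnd ℂ) (f s) * f s') := by
    intro s s'
    rw [count_identity n m h s s', Nat.cast_add, add_mul]
    congr 2
    by_cases hss : s = s' <;> simp [hss]
  simp only [step, Finset.sum_add_distrib]
  congr 1
  rw [ip, Finset.mul_sum]
  refine Finset.sum_congr rfl fun s _ => ?_
  simp [ite_mul, Finset.sum_ite_eq]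

lemma up_inj_succ (n m : ℕ) (h : 2 * (m + 2) ≤ n) :
    Function.Injective (up n (m+1)) := by
  rw [← LinearMap.ker_eq_bot, LinearMap.ker_eq_bot']
  intro f hf
  have hkey := key_identity n m (by omega) f
  rw [hf, ip_self, ip_self, ip_self] at hkey
  have hcast : (0 : ℝ) = (∑ a, Complex.normSq (down n m f a))
      + ((n - 2 * (m+1) : ℕ) : ℝ) * (∑ a, Complex.normSq (f a)) := by
    have h0 : ((0 : ℝ) : ℂ) = (((∑ a, Complex.normSq (down n m f a))
        + ((n - 2 * (m+1) : ℕ) : ℝ) * (∑ a, Complex.normSq (f a)) : ℝ) : ℂ) := by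
      push_cast
      simpa using hkey
    exact_mod_cast h0
  have hd : (0 : ℝ) ≤ ∑ a, Complex.normSq (down n m f a) :=
    Finset.sum_nonneg fun a _ => Complex.normSq_nonneg _
  have hfn : (0 : ℝ) ≤ ∑ a, Complex.normSq (f a) :=
    Finset.sum_nonneg fun a _ => Complex.normSq_nonneg _
  have hc : (2 : ℝ) ≤ ((n - 2 * (m+1) : ℕ) : ℝ) := by
    have : (2 : ℕ) ≤ n - 2 * (m+1) := by omega
    exact_mod_cast this
  have hzero : (∑ a, Complex.normSq (f a)) = 0 := by nlinarith
  exact eq_zero_of_sum_normSq _ f hzero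

lemma up_inj_zero (n : ℕ) (h : 2 ≤ n) : Function.Injective (up n 0) := by
  rw [← LinearMap.ker_eq_bot, LinearMap.ker_eq_bot']
  intro f hf
  have hn : 0 < n := by omega
  have hall : ∀ s : KSubsets n 0, s.1 = ∅ := fun s => Finset.card_eq_zero.1 s.2
  haveI : Unique (KSubsets n 0) :=
    ⟨⟨⟨∅, rfl⟩⟩, fun s => Subtype.ext (by rw [hall s]; rfl)⟩
  set t : KSubsets n 1 := ⟨{⟨0, hn⟩}, Finset.card_singleton _⟩
  have h1 : up n 0 f t = 0 := by rw [hf]; rfl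
  rw [up_apply] at h1
  have h2 : ∑ s : KSubsets n 0, f s = 0 := by
    rw [← h1]
    exact (Finset.sum_congr rfl fun s _ => by
      rw [if_pos (by rw [hall s]; exact Finset.empty_subset _)]).symm
  rw [Fintype.sum_unique] at h2
  refine Finsupp.ext fun s => ?_
  rw [Unique.eq_default s]
  simpa using h2

end Analytic
section Equivariance

lemma subset_smul_iff {n k k' : ℕ} (σ : Equiv.Perm (Fin n)) (s : KSubsets n k)
    (t : KSubsets n k') : (σ • s).1 ⊆ (σ • t).1 ↔ s.1 ⊆ t.1 := by
  rw [smul_val, smul_val]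
  exact Finset.map_subset_map

lemma up_comm (n k : ℕ) (σ : Equiv.Perm (Fin n)) (f : KSubsets n k →₀ ℂ) :
    up n k (Representation.ofMulAction ℂ (Equiv.Perm (Fin n)) (KSubsets n k) σ
        (MonoidAlgebra.ofCoeff f)).coeff
      = (Representation.ofMulAction ℂ (Equiv.Perm (Fin n)) (KSubsets n (k+1)) σ
        (MonoidAlgebra.ofCoeff (up n k f))).coeff := by
  refine Finsupp.ext fun t => ?_
  rw [Representation.coeff_ofMulAction, MonoidAlgebra.coeff_ofCoeff, up_apply, up_apply]
  refine Fintype.sum_equiv (MulAction.toPerm σ⁻¹) _ _ fun s => ?_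
  have he : MulAction.toPerm σ⁻¹ s = σ⁻¹ • s := rfl
  rw [he, Representation.coeff_ofMulAction, MonoidAlgebra.coeff_ofCoeff]
  have hiff : s.1 ⊆ t.1 ↔ (σ⁻¹ • s).1 ⊆ (σ⁻¹ • t).1 := by
    rw [subset_smul_iff]
  by_cases hs : s.1 ⊆ t.1
  · rw [if_pos hs, if_pos (hiff.1 hs)]
  · rw [if_neg hs, if_neg (fun hc => hs (hiff.2 hc))]

end Equivariance
/-- For `k + 1 ≤ n/2`, the Young module of `(n-k, k)` is isomorphic to a
subrepresentation of the Young module of `(n-k-1, k+1)`. -/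
theorem twoRow_sub (n k : ℕ) (h : 2 * (k + 1) ≤ n) :
    ∃ f : twoRowModule n k ⟶ twoRowModule n (k + 1), Mono f := by
  have hinj : Function.Injective (up n k) := by
    cases k with
    | zero => exact up_inj_zero n (by omega)
    | succ m => exact up_inj_succ n m (by omega)
  refine ⟨Rep.ofHom ⟨(MonoidAlgebra.coeffLinearEquiv ℂ).symm.toLinearMap ∘ₗ up n k ∘ₗ
      (MonoidAlgebra.coeffLinearEquiv ℂ).toLinearMap, fun σ => ?_⟩, ?_⟩
  · apply LinearMap.ext
    intro f
    exact congrArg MonoidAlgebra.ofCoeff (up_comm n k σ f.coeff)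
  · apply (Rep.mono_iff_injective _).2
    exact (MonoidAlgebra.coeffLinearEquiv ℂ).symm.injective.comp
      (hinj.comp (MonoidAlgebra.coeffLinearEquiv ℂ).injective)
end PieriGL
end
end
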